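/- Let x, y be coprime integers with x, y > 1, and let ℓ ≥ x, m ≥ y, and N be an integer with (x-1)(y-1) ≤ N ≤ ℓy + mx - (x-1)(y-1). Let a₀ ∈ {0, ..., x-1} with a₀y ≡ N (mod x), b₀ = (N - a₀y)/x, k = max(0, ⌈(b₀ - m)/y⌉), α = a₀ + kx, β = b₀ - ky. Then b₀ is a nonnegative integer, N = αy + βx, 0 ≤ α ≤ ℓ, and 0 ≤ β ≤ m. -/
import Mathlib


theorem stmt_13 (x y ℓ m N a₀ : ℤ) (hx : 1 < x) (hy : 1 < y) (hcop : IsCoprime x y)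
    (hℓ : x ≤ ℓ) (hm : y ≤ m)
    (hN1 : (x - 1) * (y - 1) ≤ N) (hN2 : N ≤ ℓ * y + m * x - (x - 1) * (y - 1))
    (ha0 : 0 ≤ a₀) (ha0' : a₀ < x) (hmod : a₀ * y ≡ N [ZMOD x]) :
    x ∣ N - a₀ * y ∧
    (let b₀ : ℤ := (N - a₀ * y) / x
     let k : ℤ := max 0 ⌈((b₀ - m : ℤ) : ℚ) / (y : ℚ)⌉
     let α : ℤ := a₀ + k * x
     let β : ℤ := b₀ - k * y
     0 ≤ b₀ ∧ N = α * y + β * x ∧ 0 ≤ α ∧ α ≤ ℓ ∧ 0 ≤ β ∧ β ≤ m) := by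
  have hx0 : (0:ℤ) < x := by linarith
  have hy0 : (0:ℤ) < y := by linarith
  have hd : x ∣ N - a₀ * y := Int.ModEq.dvd hmod
  refine ⟨hd, ?_⟩
  intro b₀ k α β
  have hb : b₀ * x = N - a₀ * y := Int.ediv_mul_cancel hd
  have hb0 : 0 ≤ b₀ := by
    by_contra h
    push_neg at h
    have h1 : b₀ + 1 ≤ 0 := by omega
    nlinarith [mul_le_mul_of_nonneg_right h1 hx0.le,
      mul_le_mul_of_nonneg_right (show a₀ ≤ x - 1 by omega) hy0.le]
  obtain ⟨c, hc⟩ : ∃ c : ℤ, ⌈((b₀ - m : ℤ) : ℚ) / (y : ℚ)⌉ = c := ⟨_, rfl⟩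
  have hkdef : k = max 0 c := by rw [← hc]
  have hαdef : α = a₀ + k * x := rfl
  have hβdef : β = b₀ - k * y := rfl
  have hyQ : (0:ℚ) < (y:ℚ) := by exact_mod_cast hy0
  have hcu : b₀ - m ≤ c * y := by
    rw [← hc]
    have h1 := Int.le_ceil (((b₀ - m : ℤ) : ℚ) / (y : ℚ))
    rw [div_le_iff₀ hyQ] at h1
    exact_mod_cast h1
  have hcl : (c - 1) * y < b₀ - m := by
    rw [← hc]
    have h2 := Int.ceil_lt_add_one (((b₀ - m : ℤ) : ℚ) / (y : ℚ))
    have h3 : ((⌈((b₀ - m : ℤ) : ℚ) / (y : ℚ)⌉ : ℚ) - 1) < ((b₀ - m : ℤ) : ℚ) / (y : ℚ) := by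
      linarith
    rw [lt_div_iff₀ hyQ] at h3
    exact_mod_cast h3
  have hNeq : N = α * y + β * x := by
    rw [hαdef, hβdef]; linear_combination -hb
  have hk0 : 0 ≤ k := le_max_left _ _
  refine ⟨hb0, hNeq, by rw [hαdef]; positivity, ?_, ?_, ?_⟩
  · rcases le_or_gt c 0 with hle | hpos
    · have hk : k = 0 := by omega
      rw [hαdef, hk]; omega
    · have hkc : k = c := by omega
      have hβl : m - y + 1 ≤ β := by
        rw [hβdef, hkc]; nlinarith
      have hαy : α * y ≤ ℓ * y + y - 1 := by
        have hβx : (m - y + 1) * x ≤ β * x :=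
          mul_le_mul_of_nonneg_right hβl hx0.le
        nlinarith
      nlinarith
  · rcases le_or_gt c 0 with hle | hpos
    · have hk : k = 0 := by omega
      rw [hβdef, hk]; omega
    · have hkc : k = c := by omega
      rw [hβdef, hkc]; nlinarith
  · rcases le_or_gt c 0 with hle | hpos
    · have hk : k = 0 := by omega
      rw [hβdef, hk]
      nlinarith [mul_le_mul_of_nonneg_right hle hy0.le]
    · have hkc : k = c := by omega
      rw [hβdef, hkc]; omega
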